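/- For every ε > 0 there exists a periodic point x ∈ X such that n_x(β(f) − f^{n_x}(x)/n_x) < ε, where f : X → ℝ is Lipschitz, n_x is the minimal period of x, and β(f) is the maximal ergodic average of f. -/

import Mathlib

open MeasureTheory Filter Real Topology
open scoped ENNReal

noncomputable section

abbrev X (d : ℕ) : Type := ℕ → Fin d

def shift {d : ℕ} (x : X d) : X d := fun n => x (n + 1)

def birkhoff {d : ℕ} (f : X d → ℝ) (n : ℕ) (x : X d) : ℝ :=
  ∑ i ∈ Finset.range n, f (shift^[i] x)

def IsPeriodic {d : ℕ} (x : X d) : Prop := ∃ n, 0 < n ∧ shift^[n] x = x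

def minPer {d : ℕ} (x : X d) : ℕ := Function.minimalPeriod shift x

def beta {d : ℕ} (f : X d → ℝ) : ℝ :=
  sSup {r : ℝ | ∃ μ : Measure (X d), IsProbabilityMeasure μ ∧ μ.map shift = μ ∧ r = ∫ x, f x ∂μ}

def Ifun {d : ℕ} (f : X d → ℝ) (x : X d) : ℝ :=
  (minPer x : ℝ) * beta f - birkhoff f (minPer x) x

def dtheta {d : ℕ} (θ : ℝ) (x y : X d) : ℝ :=
  letI : Decidable (x = y) := Classical.dec _
  if h : x = y then 0 else θ ^ Nat.find (Function.ne_iff.mp h)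

def LipWrt {d : ℕ} (θ C : ℝ) (f : X d → ℝ) : Prop :=
  ∀ x y, |f x - f y| ≤ C * dtheta θ x y

def periodize {d : ℕ} (n : ℕ) (w : Fin (n + 1) → Fin d) : X d :=
  fun i => w ⟨i % (n + 1), Nat.mod_lt i (Nat.succ_pos n)⟩

def pressure {d : ℕ} (g : X d → ℝ) : ℝ :=
  Filter.limsup (fun n : ℕ =>
    Real.log (∑ w : Fin (n + 1) → Fin d, Real.exp (birkhoff g (n + 1) (periodize n w))) / ((n : ℝ) + 1))
    Filter.atTop

def zetaVal {d : ℕ} (f : X d → ℝ) (c s : ℝ) (k : X d → ℝ) : ℝ :=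
  ∑' n : ℕ, ∑ w : Fin (n + 1) → Fin d,
    Real.exp (c * s * birkhoff f (n + 1) (periodize n w) - ((n : ℝ) + 1) * pressure (fun y => c * f y))
      * (birkhoff k (n + 1) (periodize n w) / ((n : ℝ) + 1))

def etaVal {d : ℕ} (f : X d → ℝ) (c : ℝ) (N : ℕ) (k : X d → ℝ) : ℝ :=
  ∑ n ∈ Finset.range N, ∑ w : Fin (n + 1) → Fin d,
    Real.exp (c * birkhoff f (n + 1) (periodize n w)) * (birkhoff k (n + 1) (periodize n w) / ((n : ℝ) + 1))

def piVal {d : ℕ} (f : X d → ℝ) (c : ℝ) (N : ℕ) (k : X d → ℝ) : ℝ :=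
  ∑ n ∈ Finset.range N, ∑ w : Fin (n + 1) → Fin d,
    Real.exp (c * birkhoff f (n + 1) (periodize n w) - ((n : ℝ) + 1) * pressure (fun y => c * f y))
      * (birkhoff k (n + 1) (periodize n w) / ((n : ℝ) + 1))

def cylSet {d : ℕ} (m : ℕ) (w : Fin m → Fin d) : Set (X d) :=
  {x : X d | ∀ i : Fin m, x i = w i}

def Itilde {d : ℕ} (θ : ℝ) (f : X d → ℝ) (x : X d) : EReal :=
  ⨆ ε : {e : ℝ // 0 < e},
    sInf {r : EReal | ∃ y : X d, IsPeriodic y ∧ dtheta θ x y ≤ ε.1 ∧ r = ((Ifun f y : ℝ) : EReal)}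

def orbitMeasure {d : ℕ} (x : X d) : Measure (X d) :=
  ((minPer x : ℝ≥0∞))⁻¹ • ∑ i ∈ Finset.range (minPer x), Measure.dirac (shift^[i] x)
lemma shift_iter {d : ℕ} (k : ℕ) (x : X d) (t : ℕ) : (shift^[k] x) t = x (t + k) := by
  induction k generalizing x t with
  | zero => rfl
  | succ k ih =>
    rw [Function.iterate_succ_apply, ih]
    rfl

lemma birkhoff_succ {d : ℕ} (f : X d → ℝ) (n : ℕ) (x : X d) :
    birkhoff f (n + 1) x = birkhoff f n x + f (shift^[n] x) := by
  rw [birkhoff, Finset.sum_range_succ, birkhoff]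

lemma birkhoff_add {d : ℕ} (f : X d → ℝ) (a b : ℕ) (x : X d) :
    birkhoff f (a + b) x = birkhoff f a x + birkhoff f b (shift^[a] x) := by
  induction b with
  | zero => simp [birkhoff]
  | succ b ih =>
    have e : shift^[b] (shift^[a] x) = shift^[a + b] x := by
      rw [← Function.iterate_add_apply, Nat.add_comm]
    rw [show a + (b + 1) = (a + b) + 1 from rfl, birkhoff_succ, ih, birkhoff_succ, e]
    ring

lemma dtheta_le {d : ℕ} {θ : ℝ} (hθ0 : 0 < θ) (hθ1 : θ < 1) {x y : X d} {k : ℕ}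
    (h : ∀ r < k, x r = y r) : dtheta θ x y ≤ θ ^ k := by
  rw [dtheta]
  split
  · positivity
  · rename_i hne
    apply pow_le_pow_of_le_one hθ0.le hθ1.le
    by_contra hlt
    push_neg at hlt
    exact Nat.find_spec (Function.ne_iff.mp hne) (h _ hlt)

lemma lip_agree {d : ℕ} {θ C : ℝ} (hθ0 : 0 < θ) (hθ1 : θ < 1) {f : X d → ℝ}
    (hf : LipWrt θ C f) (hC : 0 ≤ C) {x y : X d} {k : ℕ}
    (h : ∀ r < k, x r = y r) : |f x - f y| ≤ C * θ ^ k :=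
  (hf x y).trans (mul_le_mul_of_nonneg_left (dtheta_le hθ0 hθ1 h) hC)

lemma sum_geom_aux {θ : ℝ} (hθ0 : 0 < θ) (hθ1 : θ < 1) (n a : ℕ) :
    ∑ i ∈ Finset.range n, θ ^ (n - i + a) ≤ θ ^ a / (1 - θ) := by
  have h1 : ∑ i ∈ Finset.range n, θ ^ (n - i + a) = θ ^ a * ∑ i ∈ Finset.range n, θ ^ (n - i) := by
    rw [Finset.mul_sum]
    refine Finset.sum_congr rfl fun i hi => ?_
    rw [← pow_add]; ring_nf
  rw [h1, div_eq_mul_inv]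
  apply mul_le_mul_of_nonneg_left _ (by positivity)
  have h2 : ∑ i ∈ Finset.range n, θ ^ (n - i) = ∑ j ∈ Finset.range n, θ ^ (j + 1) := by
    rw [← Finset.sum_range_reflect (fun j => θ ^ (j + 1)) n]
    refine Finset.sum_congr rfl fun i hi => ?_
    simp only [Finset.mem_range] at hi
    congr 1
    omega
  have h3 : ∑ j ∈ Finset.range n, θ ^ (j + 1) ≤ ∑ j ∈ Finset.range n, θ ^ j := by
    apply Finset.sum_le_sum
    intro j hj
    simp only [Finset.mem_range] at hj
    exact pow_le_pow_of_le_one hθ0.le hθ1.le (by omega)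
  have h4 : ∑ j ∈ Finset.range n, θ ^ j ≤ (1 - θ)⁻¹ := by
    rw [geom_sum_eq (ne_of_lt hθ1)]
    have h5 : (θ ^ n - 1) / (θ - 1) = (1 - θ ^ n) / (1 - θ) := by
      rw [← neg_div_neg_eq]; ring_nf
    rw [h5, ← one_div]
    gcongr
    · nlinarith [pow_nonneg hθ0.le n]
  linarith [h2 ▸ h3]
lemma birkhoff_agree {d : ℕ} {θ C : ℝ} (hθ0 : 0 < θ) (hθ1 : θ < 1) {f : X d → ℝ}
    (hf : LipWrt θ C f) (hC : 0 ≤ C) {x y : X d} {n a : ℕ}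
    (h : ∀ u, u < n + a → x u = y u) :
    |birkhoff f n x - birkhoff f n y| ≤ C * θ ^ a / (1 - θ) := by
  have h1 : birkhoff f n x - birkhoff f n y
      = ∑ i ∈ Finset.range n, (f (shift^[i] x) - f (shift^[i] y)) := by
    rw [birkhoff, birkhoff, Finset.sum_sub_distrib]
  rw [h1]
  refine (Finset.abs_sum_le_sum_abs _ _).trans ?_
  have h2 : ∀ i ∈ Finset.range n, |f (shift^[i] x) - f (shift^[i] y)| ≤ C * θ ^ (n - i + a) := by
    intro i hi
    simp only [Finset.mem_range] at hi
    refine lip_agree hθ0 hθ1 hf hC fun r hr => ?_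
    rw [shift_iter, shift_iter]
    exact h _ (by omega)
  refine (Finset.sum_le_sum h2).trans ?_
  rw [← Finset.mul_sum, mul_div_assoc]
  exact mul_le_mul_of_nonneg_left (sum_geom_aux hθ0 hθ1 n a) hC

lemma periodize_mod {d : ℕ} (n : ℕ) (w : Fin (n + 1) → Fin d) (u : ℕ) :
    periodize n w u = periodize n w (u % (n + 1)) := by
  show w _ = w _
  congr 1
  exact Fin.ext (Nat.mod_mod_of_dvd u dvd_rfl).symm

lemma shift_periodize {d : ℕ} (n : ℕ) (w : Fin (n + 1) → Fin d) :
    shift^[n + 1] (periodize n w) = periodize n w := by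
  funext t
  rw [shift_iter]
  show w _ = w _
  congr 1
  exact Fin.ext (Nat.add_mod_right t (n + 1))

lemma birkhoff_mul {d : ℕ} (f : X d → ℝ) {m : ℕ} {p : X d} (h : shift^[m] p = p) (k : ℕ) :
    birkhoff f (k * m) p = k * birkhoff f m p := by
  induction k with
  | zero => simp [birkhoff]
  | succ k ih =>
    have hkm : shift^[k * m] p = p := by
      have : Function.IsPeriodicPt shift m p := h
      exact (this.const_mul k)
    rw [show (k + 1) * m = k * m + m by ring, birkhoff_add, ih, hkm]
    push_cast
    ring

lemma per_bound {d : ℕ} {f : X d → ℝ} {ε : ℝ} (hε : 0 < ε)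
    (Hcon : ∀ y : X d, IsPeriodic y →
      ε ≤ (minPer y : ℝ) * (beta f - birkhoff f (minPer y) y / (minPer y : ℝ)))
    {n : ℕ} (hn : 0 < n) {p : X d} (h : shift^[n] p = p) :
    birkhoff f n p ≤ n * beta f - ε := by
  have hp : Function.IsPeriodicPt shift n p := h
  have m0pos : 0 < minPer p := hp.minimalPeriod_pos hn
  have hdvd : minPer p ∣ n := hp.minimalPeriod_dvd
  obtain ⟨k, hk⟩ := hdvd
  have hper0 : shift^[minPer p] p = p := Function.isPeriodicPt_minimalPeriod shift p
  have hkpos : 0 < k := by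
    rcases Nat.eq_zero_or_pos k with h0 | h0
    · subst h0; simp at hk; omega
    · exact h0
  have hB := Hcon p ⟨n, hn, h⟩
  set m0 := minPer p with hm0
  set B := birkhoff f m0 p with hBdef
  have hm0ne : (m0 : ℝ) ≠ 0 := Nat.cast_ne_zero.mpr m0pos.ne'
  have hB' : B ≤ (m0 : ℝ) * beta f - ε := by
    have : (m0 : ℝ) * (beta f - B / m0) = m0 * beta f - B := by field_simp
    linarith [hB, this ▸ hB]
  have hbn : birkhoff f n p = (k : ℝ) * B := by
    rw [hk, Nat.mul_comm, birkhoff_mul f hper0 k]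
  rw [hbn, hk]
  push_cast
  have hk1 : (1 : ℝ) ≤ k := by exact_mod_cast hkpos
  nlinarith [hB', hk1, hε]

lemma upper_bound {d : ℕ} {θ C : ℝ} (hθ0 : 0 < θ) (hθ1 : θ < 1) {f : X d → ℝ}
    (hf : LipWrt θ C f) (hC : 0 ≤ C) {ε : ℝ} (hε : 0 < ε)
    (Hcon : ∀ y : X d, IsPeriodic y →
      ε ≤ (minPer y : ℝ) * (beta f - birkhoff f (minPer y) y / (minPer y : ℝ)))
    (y : X d) (n : ℕ) (hn : 0 < n) :
    birkhoff f n y ≤ n * beta f + C / (1 - θ) := by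
  obtain ⟨n', rfl⟩ : ∃ n', n = n' + 1 := ⟨n - 1, by omega⟩
  set p := periodize n' (fun t => y t.val) with hpdef
  have hagree : ∀ u, u < (n' + 1) + 0 → y u = p u := by
    intro u hu
    show y u = (fun t : Fin (n'+1) => y t.val) _
    simp only
    congr 1
    exact (Nat.mod_eq_of_lt (by omega)).symm
  have h1 := birkhoff_agree hθ0 hθ1 hf hC hagree
  have h2 := per_bound hε Hcon (Nat.succ_pos n') (shift_periodize n' (fun t => y t.val))
  rw [← hpdef] at h2
  push_cast at h2
  have h3 := abs_le.mp h1
  simp only [pow_zero, mul_one] at h3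
  have hden : 0 ≤ C / (1 - θ) := by
    apply div_nonneg hC
    linarith
  push_cast at h2 ⊢
  linarith [h3.1, h3.2, h2]
lemma removal_step {d : ℕ} {θ C : ℝ} (hθ0 : 0 < θ) (hθ1 : θ < 1) {f : X d → ℝ}
    (hf : LipWrt θ C f) (hC : 0 ≤ C) {ε : ℝ} (hε : 0 < ε)
    (Hcon : ∀ y : X d, IsPeriodic y →
      ε ≤ (minPer y : ℝ) * (beta f - birkhoff f (minPer y) y / (minPer y : ℝ)))
    {m : ℕ} (hm : C * θ ^ m / (1 - θ) ≤ ε / 4)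
    (x : X d) {i j n : ℕ} (hij : i < j) (hjn : j ≤ n)
    (hmatch : ∀ t < m, x (i + t) = x (j + t)) :
    ∃ x' : X d, birkhoff f n x - ((j - i : ℕ) : ℝ) * beta f + ε / 2
      ≤ birkhoff f (n - (j - i)) x' := by
  set ℓ := j - i with hℓ
  have hℓpos : 0 < ℓ := by omega
  have e : ℓ - 1 + 1 = ℓ := by omega
  set w : Fin (ℓ - 1 + 1) → Fin d := fun t => x (i + t.val) with hw
  set q := periodize (ℓ - 1) w with hqdef
  have hq : shift^[ℓ] q = q := by
    have := shift_periodize (ℓ - 1) w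
    rwa [e] at this
  -- key periodicity claim on x
  have hxmod : ∀ u, u < ℓ + m → x (i + u) = x (i + u % ℓ) := by
    intro u
    induction u using Nat.strong_induction_on with
    | _ u ih =>
      intro hu
      by_cases hcase : u < ℓ
      · rw [Nat.mod_eq_of_lt hcase]
      · push_neg at hcase
        have ht : u - ℓ < m := by omega
        have h1 : x (i + u) = x (i + (u - ℓ)) := by
          have h2 := hmatch (u - ℓ) ht
          have : j + (u - ℓ) = i + u := by omega
          rw [this] at h2
          rw [← h2]
        rw [h1, ih (u - ℓ) (by omega) (by omega)]
        have hmm : u % ℓ = (u - ℓ) % ℓ := by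
          conv_lhs => rw [show u = ℓ + (u - ℓ) by omega]
          rw [Nat.add_mod_left]
        rw [hmm]
  have hq_eq : ∀ u, u < ℓ + m → (shift^[i] x) u = q u := by
    intro u hu
    show (shift^[i] x) u = x (i + u % (ℓ - 1 + 1))
    rw [shift_iter, e, Nat.add_comm u i]
    exact hxmod u hu
  have est1 := birkhoff_agree hθ0 hθ1 hf hC hq_eq
  have hloopβ : birkhoff f ℓ q ≤ (ℓ : ℝ) * beta f - ε := per_bound hε Hcon hℓpos hq
  set x' : X d := fun t => if t < i then x t else x (t + ℓ) with hx'
  refine ⟨x', ?_⟩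
  have hagree' : ∀ u, u < i + m → x' u = x u := by
    intro u hu
    by_cases hui : u < i
    · simp [hx', hui]
    · push_neg at hui
      have : x' u = x (u + ℓ) := by simp [hx', Nat.not_lt.mpr hui]
      rw [this, show u + ℓ = j + (u - i) by omega, ← hmatch (u - i) (by omega)]
      congr 1
      omega
  have est3 := birkhoff_agree hθ0 hθ1 hf hC (n := i) (a := m) hagree'
  have hx'shift : shift^[i] x' = shift^[j] x := by
    funext r
    rw [shift_iter, shift_iter]
    have : ¬ (r + i < i) := by omega
    simp only [hx', this, if_false]
    congr 1
    omega
  have hsplit1 : birkhoff f n x = birkhoff f i x + (birkhoff f ℓ (shift^[i] x)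
      + birkhoff f (n - j) (shift^[j] x)) := by
    conv_lhs => rw [show n = i + (ℓ + (n - j)) by omega]
    rw [birkhoff_add, birkhoff_add, ← Function.iterate_add_apply,
      show ℓ + i = j by omega]
  have hsplit2 : birkhoff f (n - ℓ) x' = birkhoff f i x'
      + birkhoff f (n - j) (shift^[j] x) := by
    conv_lhs => rw [show n - ℓ = i + (n - j) by omega]
    rw [birkhoff_add, hx'shift]
  have habs1 := abs_le.mp est1
  have habs3 := abs_le.mp est3
  rw [hsplit2]
  have hKm : C * θ ^ m / (1 - θ) ≤ ε / 4 := hm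
  have : birkhoff f ℓ (shift^[i] x) ≤ (ℓ : ℝ) * beta f - ε + ε / 4 :=
    by linarith [habs1.2, hloopβ, hKm]
  push_cast at hsplit1 hloopβ this ⊢
  linarith [habs3.1, hsplit1, this]
lemma dtheta_le_one {d : ℕ} {θ : ℝ} (hθ0 : 0 < θ) (hθ1 : θ < 1) (x y : X d) :
    dtheta θ x y ≤ 1 := by
  rw [dtheta]
  split
  · norm_num
  · exact pow_le_one₀ hθ0.le hθ1.le

lemma shift_measurable {d : ℕ} : Measurable (shift (d := d)) :=
  measurable_pi_iff.mpr fun n => measurable_pi_apply (n + 1)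

lemma f_measurable {d : ℕ} {θ C : ℝ} (hθ0 : 0 < θ) (hθ1 : θ < 1) {f : X d → ℝ}
    (hf : LipWrt θ C f) (hC : 0 ≤ C) : Measurable f := by
  have fn_meas : ∀ n : ℕ, Measurable (fun x : X d =>
      f (periodize n (fun t : Fin (n + 1) => x t.val))) := by
    intro n
    have h1 : Measurable (fun x : X d => (fun t : Fin (n + 1) => x t.val)) :=
      measurable_pi_iff.mpr fun t => measurable_pi_apply t.val
    exact (measurable_of_countable (fun v : Fin (n + 1) → Fin d => f (periodize n v))).comp h1
  apply measurable_of_tendsto_metrizable fn_meas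
  rw [tendsto_pi_nhds]
  intro x
  have key : ∀ n : ℕ, |f (periodize n (fun t : Fin (n + 1) => x t.val)) - f x| ≤ C * θ ^ (n + 1) := by
    intro n
    refine lip_agree hθ0 hθ1 hf hC fun r hr => ?_
    show x (r % (n + 1)) = x r
    rw [Nat.mod_eq_of_lt hr]
  rw [tendsto_iff_dist_tendsto_zero]
  have hlim : Filter.Tendsto (fun n : ℕ => C * θ ^ (n + 1)) Filter.atTop (nhds 0) := by
    have : Filter.Tendsto (fun n : ℕ => θ ^ (n + 1)) Filter.atTop (nhds 0) :=
      ((tendsto_pow_atTop_nhds_zero_of_lt_one hθ0.le hθ1).comp (Filter.tendsto_add_atTop_nat 1))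
    simpa using this.const_mul C
  refine squeeze_zero (g := fun n : ℕ => C * θ ^ (n + 1)) (fun n => dist_nonneg)
    (fun n => ?_) hlim
  rw [Real.dist_eq]
  exact key n

lemma f_bounded {d : ℕ} (hd : 0 < d) {θ C : ℝ} (hθ0 : 0 < θ) (hθ1 : θ < 1) {f : X d → ℝ}
    (hf : LipWrt θ C f) (hC : 0 ≤ C) :
    ∀ x : X d, |f x| ≤ |f (fun _ => ⟨0, hd⟩)| + C := by
  intro x
  have h1 := (hf x (fun _ => ⟨0, hd⟩)).trans
    (mul_le_mul_of_nonneg_left (dtheta_le_one hθ0 hθ1 _ _) hC)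
  rw [mul_one] at h1
  have := abs_sub_abs_le_abs_sub (f x) (f (fun _ => ⟨0, hd⟩))
  linarith

section MeasurePart

variable {d : ℕ} {f : X d → ℝ} {μ : MeasureTheory.Measure (X d)}

lemma f_integrable (hmeas : Measurable f) {B : ℝ} (hB : ∀ x, |f x| ≤ B)
    [IsProbabilityMeasure μ] (k : ℕ) :
    Integrable (fun x => f (shift^[k] x)) μ := by
  refine Integrable.mono' (integrable_const B) ?_ ?_
  · exact (hmeas.comp (shift_measurable.iterate k)).aestronglyMeasurable
  · exact Filter.Eventually.of_forall fun x => hB _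

lemma integral_comp_shift (hmeas : Measurable f) {B : ℝ} (hB : ∀ x, |f x| ≤ B)
    [IsProbabilityMeasure μ] (hinv : μ.map shift = μ) (k : ℕ) :
    ∫ x, f (shift^[k] x) ∂μ = ∫ x, f x ∂μ := by
  induction k with
  | zero => simp
  | succ k ih =>
    have h1 : ∀ x : X d, f (shift^[k+1] x) = (fun y => f (shift^[k] y)) (shift x) := by
      intro x
      rw [Function.iterate_succ_apply]
    have hsm : AEStronglyMeasurable (fun y => f (shift^[k] y)) (Measure.map shift μ) := by
      rw [hinv]
      exact (hmeas.comp (shift_measurable.iterate k)).aestronglyMeasurable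
    have h2 := integral_map (μ := μ) shift_measurable.aemeasurable hsm
    rw [hinv] at h2
    simp only [h1]
    rw [← h2, ih]

lemma integral_birkhoff (hmeas : Measurable f) {B : ℝ} (hB : ∀ x, |f x| ≤ B)
    [IsProbabilityMeasure μ] (hinv : μ.map shift = μ) (N : ℕ) :
    ∫ x, birkhoff f N x ∂μ = N * ∫ x, f x ∂μ := by
  have h1 : ∫ x, birkhoff f N x ∂μ = ∑ i ∈ Finset.range N, ∫ x, f (shift^[i] x) ∂μ := by
    simp only [birkhoff]
    exact integral_finset_sum _ fun i _ => f_integrable hmeas hB i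
  rw [h1]
  rw [Finset.sum_congr rfl fun i _ => integral_comp_shift hmeas hB hinv i]
  simp [mul_comm]

lemma beta_S_nonempty (hd : 0 < d) (hmeas : Measurable f) :
    Set.Nonempty {r : ℝ | ∃ μ : Measure (X d), IsProbabilityMeasure μ ∧ μ.map shift = μ
      ∧ r = ∫ x, f x ∂μ} := by
  refine ⟨f (fun _ => ⟨0, hd⟩), Measure.dirac (fun _ => ⟨0, hd⟩), inferInstance, ?_, ?_⟩
  · rw [Measure.map_dirac' shift_measurable]
    rfl
  · rw [integral_dirac' f _ hmeas.stronglyMeasurable]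

lemma beta_S_bddAbove {B : ℝ} (hB : ∀ x, |f x| ≤ B) :
    BddAbove {r : ℝ | ∃ μ : Measure (X d), IsProbabilityMeasure μ ∧ μ.map shift = μ
      ∧ r = ∫ x, f x ∂μ} := by
  refine ⟨B, fun r hr => ?_⟩
  obtain ⟨μ, hprob, _, rfl⟩ := hr
  have h1 : ‖∫ x, f x ∂μ‖ ≤ B * (μ Set.univ).toReal :=
    norm_integral_le_of_norm_le_const (Filter.Eventually.of_forall fun x => hB x)
  rw [show μ Set.univ = 1 from hprob.measure_univ] at h1
  simp only [ENNReal.toReal_one, mul_one, Real.norm_eq_abs] at h1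
  linarith [le_abs_self (∫ x, f x ∂μ), h1]

lemma exists_good_start (hd : 0 < d) (hmeas : Measurable f) {B : ℝ} (hB : ∀ x, |f x| ≤ B)
    {N : ℕ} (hN : 0 < N) {c : ℝ} (hc : c < N * beta f) :
    ∃ x : X d, c < birkhoff f N x := by
  by_contra hcon
  push_neg at hcon
  have hlt : c / N < beta f := by
    rw [div_lt_iff₀ (by positivity)]
    linarith [hc, mul_comm (beta f) ((N:ℝ))]
  obtain ⟨r, hrS, hr⟩ := exists_lt_of_lt_csSup (beta_S_nonempty hd hmeas) hlt
  obtain ⟨μ, hprob, hinv, rfl⟩ := hrS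
  have h1 : ∫ x, birkhoff f N x ∂μ = N * ∫ x, f x ∂μ := integral_birkhoff hmeas hB hinv N
  have h2 : ∫ x, birkhoff f N x ∂μ ≤ c := by
    have hint : Integrable (fun x => birkhoff f N x) μ := by
      simp only [birkhoff]
      exact integrable_finset_sum _ fun i _ => f_integrable hmeas hB i
    calc ∫ x, birkhoff f N x ∂μ ≤ ∫ _, c ∂μ := integral_mono hint (integrable_const c) hcon
      _ = c := by simp
  have h4 : c < (∫ x, f x ∂μ) * N := (div_lt_iff₀ (by positivity)).mp hr
  linarith [h1, h2, h4, mul_comm ((N:ℝ)) (∫ x, f x ∂μ)]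

end MeasurePart
lemma dtheta_nonneg {d : ℕ} {θ : ℝ} (hθ0 : 0 < θ) (x y : X d) : 0 ≤ dtheta θ x y := by
  rw [dtheta]
  split
  · exact le_refl 0
  · positivity

lemma pigeonhole_block {d m : ℕ} (hd : 0 < d) (y : X d) :
    ∃ i j : ℕ, i < j ∧ j ≤ d ^ m ∧ ∀ t < m, y (i + t) = y (j + t) := by
  set P := d ^ m with hP
  have hcard : Fintype.card (Fin m → Fin d) < Fintype.card (Fin (P + 1)) := by
    simp [hP]
  obtain ⟨a, b, hab, hg⟩ := Fintype.exists_ne_map_eq_of_card_lt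
    (fun a : Fin (P + 1) => (fun t : Fin m => y (a.val + t.val))) hcard
  rcases lt_or_gt_of_ne hab with h | h
  · exact ⟨a, b, h, Nat.lt_succ_iff.mp b.isLt, fun t ht => congrFun hg ⟨t, ht⟩⟩
  · exact ⟨b, a, h, Nat.lt_succ_iff.mp a.isLt, fun t ht => (congrFun hg ⟨t, ht⟩).symm⟩

theorem stmt3 (d : ℕ) (hd : 0 < d) (θ C : ℝ) (hθ0 : 0 < θ) (hθ1 : θ < 1)
    (f : X d → ℝ) (hf : LipWrt θ C f) :
    ∀ ε > (0 : ℝ), ∃ x : X d, IsPeriodic x ∧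
      (minPer x : ℝ) * (beta f - birkhoff f (minPer x) x / (minPer x : ℝ)) < ε := by
  intro ε hε
  by_contra hcon
  push_neg at hcon
  -- normalize the Lipschitz constant
  set C' := |C| with hC'def
  have hC : 0 ≤ C' := abs_nonneg C
  have hf' : LipWrt θ C' f := fun x y =>
    (hf x y).trans (mul_le_mul_of_nonneg_right (le_abs_self C) (dtheta_nonneg hθ0 x y))
  have h1θ : 0 < 1 - θ := by linarith
  have hmeas : Measurable f := f_measurable hθ0 hθ1 hf' hC
  set B := |f (fun _ => ⟨0, hd⟩)| + C' with hBdef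
  have hB : ∀ x : X d, |f x| ≤ B := f_bounded hd hθ0 hθ1 hf' hC
  set K := C' / (1 - θ) with hKdef
  have hK : 0 ≤ K := div_nonneg hC h1θ.le
  -- choose m with small tail
  obtain ⟨m, hmθ⟩ : ∃ m : ℕ, θ ^ m < (ε / 4) * (1 - θ) / (C' + 1) := by
    apply exists_pow_lt_of_lt_one _ hθ1
    positivity
  have hm : C' * θ ^ m / (1 - θ) ≤ ε / 4 := by
    rw [div_le_iff₀ h1θ]
    have hpow : 0 ≤ θ ^ m := by positivity
    have h2 : C' * θ ^ m ≤ (C' + 1) * θ ^ m := by nlinarith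
    have h3 : (C' + 1) * θ ^ m ≤ (C' + 1) * ((ε / 4) * (1 - θ) / (C' + 1)) := by
      apply mul_le_mul_of_nonneg_left hmθ.le (by linarith)
    have h4 : (C' + 1) * ((ε / 4) * (1 - θ) / (C' + 1)) = (ε / 4) * (1 - θ) := by
      field_simp
    linarith
  set P := d ^ m with hPdef
  have hPpos : 0 < P := by positivity
  obtain ⟨R, hR⟩ := exists_nat_gt ((K + ε / 4) / (ε / 2))
  have hRε : K + ε / 4 < R * (ε / 2) := by
    rw [div_lt_iff₀ (by positivity)] at hR
    linarith
  set N := R * P + P + 1 with hNdef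
  have hNpos : 0 < N := by omega
  -- the iteration
  have main : ∀ r : ℕ, r ≤ R → ∃ (y : X d) (n : ℕ), N ≤ n + r * P ∧ 0 < n ∧
      (n : ℝ) * beta f - ε / 4 + r * (ε / 2) ≤ birkhoff f n y := by
    intro r
    induction r with
    | zero =>
      intro _
      obtain ⟨x, hx⟩ := exists_good_start hd hmeas hB hNpos
        (show (N : ℝ) * beta f - ε / 4 < N * beta f by linarith)
      exact ⟨x, N, by omega, hNpos, by simpa using hx.le⟩
    | succ r ih =>
      intro hr
      obtain ⟨y, n, hn1, hn2, hn3⟩ := ih (by omega)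
      have hnP : P + 1 ≤ n := by
        have : r * P ≤ R * P := Nat.mul_le_mul_right P (by omega)
        omega
      obtain ⟨i, j, hij, hjP, hmatch⟩ := pigeonhole_block (m := m) hd y
      have hjn : j ≤ n := by omega
      obtain ⟨x', hx'⟩ := removal_step hθ0 hθ1 hf' hC hε hcon hm y hij hjn hmatch
      refine ⟨x', n - (j - i), ?_, by omega, ?_⟩
      · have hji : j - i ≤ P := by omega
        have hmul : (r + 1) * P = r * P + P := by ring
        have : N ≤ n + r * P := hn1
        omega
      · have hcast : ((n - (j - i) : ℕ) : ℝ) = (n : ℝ) - ((j - i : ℕ) : ℝ) := by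
          have : (j - i : ℕ) ≤ n := by omega
          push_cast [this]
          ring
        rw [hcast]
        push_cast
        have := hx'
        nlinarith [hx', hn3]
  obtain ⟨y, n, hn1, hn2, hn3⟩ := main R le_rfl
  have hub : birkhoff f n y ≤ n * beta f + K :=
    upper_bound hθ0 hθ1 hf' hC hε hcon y n hn2
  have : (R : ℝ) * (ε / 2) ≤ K + ε / 4 := by linarith [hn3, hub]
  linarith
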